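/- Let p ≥ 1 and k ≥ 2 be integers. Let S = (s₁, …, s_L) be a finite sequence of vectors in {0,1}^{k−1}, each having exactly one coordinate equal to 1. Suppose that for every coordinate position s ∈ {1, …, k−1} the following holds: whenever i₁ < i₂ < ⋯ < i_p are p indices such that each of s_{i₁}, …, s_{i_p} has its 1 in coordinate s, there exists an index i with i₁ < i < i_p such that s_i has its 1 in some coordinate strictly smaller than s. Then L ≤ p^{k−1} − 1. -/

import Mathlib

theorem process_lemma (p k : ℕ) (hp : 1 ≤ p) (hk : 2 ≤ k)
    (L : ℕ) (S : Fin L → Fin (k - 1) → Fin 2)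
    (hone : ∀ i, ∃! s, S i s = 1)
    (hproc : ∀ s : Fin (k - 1), ∀ f : Fin p → Fin L, StrictMono f →
      (∀ a, S (f a) s = 1) →
      ∃ i : Fin L, f ⟨0, by omega⟩ < i ∧ i < f ⟨p - 1, by omega⟩ ∧
        ∃ s' : Fin (k - 1), s' < s ∧ S i s' = 1) :
    L ≤ p ^ (k - 1) - 1 := by
  rcases Nat.eq_zero_or_pos L with hL | hL
  · have : 1 ≤ p ^ (k - 1) := Nat.one_le_pow _ _ hp
    omega
  have hm1 : 1 ≤ k - 1 := by omega
  have hone' : ∀ i, ∃ s, S i s = 1 ∧ ∀ y, S i y = 1 → y = s := fun i => hone i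
  choose σ hσ1 hσu using hone'
  -- reversed coordinate
  set c : Fin L → ℕ := fun j => k - 1 - 1 - (σ j).val with hc
  have hclt : ∀ j, c j < k - 1 := fun j => by
    have := (σ j).isLt
    simp only [hc]
    omega
  have hcinj : ∀ j j', c j = c j' → σ j = σ j' := by
    intro j j' h
    have h1 := (σ j).isLt
    have h2 := (σ j').isLt
    apply Fin.ext
    simp only [hc] at h
    omega
  -- the counter sets
  set T : ℕ → ℕ → Finset (Fin L) := fun i t =>
    Finset.univ.filter (fun j => j.val ≤ i ∧ c j = t ∧
      ∀ j' : Fin L, j < j' → j'.val ≤ i → c j' ≤ t) with hT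
  set d : ℕ → ℕ → ℕ := fun i t => (T i t).card with hd
  set V : ℕ → ℕ := fun i => ∑ t ∈ Finset.range (k - 1), d i t * p ^ t with hV
  have memT : ∀ i t (j : Fin L), j ∈ T i t ↔ (j.val ≤ i ∧ c j = t ∧
      ∀ j' : Fin L, j < j' → j'.val ≤ i → c j' ≤ t) := by
    intro i t j
    simp [hT]
  -- geometric bound
  have geo : ∀ (g : ℕ → ℕ), (∀ t, g t < p) → ∀ n,
      ∑ t ∈ Finset.range n, g t * p ^ t < p ^ n := by
    intro g hg n
    induction n with
    | zero => simp
    | succ n ih =>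
      rw [Finset.sum_range_succ, pow_succ]
      have h1 : g n * p ^ n ≤ (p - 1) * p ^ n :=
        Nat.mul_le_mul_right _ (by have := hg n; omega)
      have h2 : (p - 1) * p ^ n = p * p ^ n - p ^ n := by
        rw [Nat.sub_mul, one_mul]
      have h3 : p ^ n ≤ p * p ^ n := Nat.le_mul_of_pos_left _ hp
      have h4 : p ^ n * p = p * p ^ n := Nat.mul_comm _ _
      omega
  -- each counter is < p
  have hdlt : ∀ i t, d i t < p := by
    intro i t
    by_contra hcon
    push_neg at hcon
    have hcard : p ≤ (T i t).card := hcon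
    set f := (T i t).orderEmbOfCardLe hcard with hf
    have hfm : ∀ a, f a ∈ T i t := fun a => Finset.orderEmbOfCardLe_mem _ hcard a
    have hjstar := hfm ⟨0, by omega⟩
    rw [memT] at hjstar
    obtain ⟨hj1, hj2, hj3⟩ := hjstar
    have hall : ∀ a, S (f a) (σ (f ⟨0, by omega⟩)) = 1 := by
      intro a
      have ha := hfm a
      rw [memT] at ha
      have hcc : c (f a) = c (f ⟨0, by omega⟩) := by rw [ha.2.1, hj2]
      rw [← hcinj _ _ hcc]
      exact hσ1 _
    obtain ⟨i', hi1, hi2, s', hs', hS'⟩ :=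
      hproc (σ (f ⟨0, by omega⟩)) f (OrderEmbedding.strictMono f) hall
    have hσi' : s' = σ i' := hσu i' s' hS'
    have hlast := hfm ⟨p - 1, by omega⟩
    rw [memT] at hlast
    have hile : i'.val ≤ i := le_trans (le_of_lt hi2) hlast.1
    have hci' := hj3 i' hi1 hile
    have h1 : s'.val < (σ (f ⟨0, by omega⟩)).val := hs'
    have h2 : (σ (f ⟨0, by omega⟩)).val < k - 1 := (σ _).isLt
    have h3 : c i' = k - 1 - 1 - s'.val := by rw [hc]; simp [← hσi']
    have h4 : c (f ⟨0, by omega⟩) = k - 1 - 1 - (σ (f ⟨0, by omega⟩)).val := rfl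
    rw [h4] at hj2
    omega
  -- transitions
  have step : ∀ i : ℕ, i + 1 < L → V i < V (i + 1) := by
    intro i hiL
    set jnew : Fin L := ⟨i + 1, hiL⟩ with hjnew
    have hjval : jnew.val = i + 1 := rfl
    set t₀ := c jnew with ht₀
    have ht₀m : t₀ < k - 1 := hclt jnew
    -- (a) t₀ < t: unchanged
    have ha : ∀ t, t₀ < t → T (i + 1) t = T i t := by
      intro t ht
      ext j
      rw [memT, memT]
      constructor
      · rintro ⟨h1, h2, h3⟩
        have hji : j.val ≤ i := by
          rcases Nat.lt_or_ge j.val (i + 1) with h | h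
          · omega
          · exfalso
            have hje : j = jnew := Fin.ext (by omega)
            rw [hje] at h2
            omega
        exact ⟨hji, h2, fun j' hj' hj'' => h3 j' hj' (by omega)⟩
      · rintro ⟨h1, h2, h3⟩
        refine ⟨by omega, h2, fun j' hj' hj'' => ?_⟩
        rcases Nat.lt_or_ge j'.val (i + 1) with h | h
        · exact h3 j' hj' (by omega)
        · have hje : j' = jnew := Fin.ext (by omega)
          rw [hje]
          omega
    -- (b) t = t₀: insert
    have hb : T (i + 1) t₀ = insert jnew (T i t₀) := by
      ext j
      rw [memT, Finset.mem_insert, memT]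
      constructor
      · rintro ⟨h1, h2, h3⟩
        rcases Nat.lt_or_ge j.val (i + 1) with h | h
        · exact Or.inr ⟨by omega, h2, fun j' hj' hj'' => h3 j' hj' (by omega)⟩
        · exact Or.inl (Fin.ext (by omega))
      · rintro (h | ⟨h1, h2, h3⟩)
        · subst h
          refine ⟨by omega, rfl, fun j' hj' hj'' => ?_⟩
          exfalso
          have hlt : jnew.val < j'.val := hj'
          omega
        · refine ⟨by omega, h2, fun j' hj' hj'' => ?_⟩
          rcases Nat.lt_or_ge j'.val (i + 1) with h | h
          · exact h3 j' hj' (by omega)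
          · have hje : j' = jnew := Fin.ext (by omega)
            rw [hje]
    have hjnotin : jnew ∉ T i t₀ := by
      rw [memT]
      rintro ⟨h1, _, _⟩
      omega
    -- (c) t < t₀: empty
    have hcc : ∀ t, t < t₀ → T (i + 1) t = ∅ := by
      intro t ht
      ext j
      rw [memT]
      simp only [Finset.notMem_empty, iff_false]
      rintro ⟨h1, h2, h3⟩
      have hjlt : j < jnew := by
        have hne : j.val ≠ i + 1 := by
          intro h
          have hje : j = jnew := Fin.ext (by omega)
          rw [hje] at h2
          omega
        show j.val < jnew.val
        omega
      have := h3 jnew hjlt (by omega)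
      omega
    -- split sums
    have hsplit : ∀ F : ℕ → ℕ, ∑ t ∈ Finset.range (k - 1), F t =
        (∑ t ∈ Finset.range t₀, F t) + F t₀ + ∑ t ∈ Finset.Ico (t₀ + 1) (k - 1), F t := by
      intro F
      rw [Finset.range_eq_Ico,
        ← Finset.sum_Ico_consecutive F (Nat.zero_le (t₀ + 1)) (by omega : t₀ + 1 ≤ k - 1),
        ← Finset.range_eq_Ico, Finset.sum_range_succ]
    have hVi : V i = (∑ t ∈ Finset.range t₀, d i t * p ^ t) + d i t₀ * p ^ t₀ +
        ∑ t ∈ Finset.Ico (t₀ + 1) (k - 1), d i t * p ^ t := hsplit _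
    have hVi1 : V (i + 1) = (∑ t ∈ Finset.range t₀, d (i + 1) t * p ^ t) +
        d (i + 1) t₀ * p ^ t₀ +
        ∑ t ∈ Finset.Ico (t₀ + 1) (k - 1), d (i + 1) t * p ^ t := hsplit _
    have hz : ∑ t ∈ Finset.range t₀, d (i + 1) t * p ^ t = 0 := by
      apply Finset.sum_eq_zero
      intro t ht
      rw [Finset.mem_range] at ht
      have hzero : d (i + 1) t = 0 := by
        simp only [hd, hcc t ht, Finset.card_empty]
      rw [hzero, zero_mul]
    have hdt₀ : d (i + 1) t₀ = d i t₀ + 1 := by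
      simp only [hd, hb]
      rw [Finset.card_insert_of_notMem hjnotin]
    have hdmul : d (i + 1) t₀ * p ^ t₀ = d i t₀ * p ^ t₀ + p ^ t₀ := by
      rw [hdt₀]; ring
    have hIco : ∑ t ∈ Finset.Ico (t₀ + 1) (k - 1), d (i + 1) t * p ^ t =
        ∑ t ∈ Finset.Ico (t₀ + 1) (k - 1), d i t * p ^ t := by
      apply Finset.sum_congr rfl
      intro t ht
      rw [Finset.mem_Ico] at ht
      simp only [hd, ha t ht.1]
    have hA : ∑ t ∈ Finset.range t₀, d i t * p ^ t < p ^ t₀ :=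
      geo (fun t => d i t) (fun t => hdlt i t) t₀
    omega
  -- V 0 ≥ 1
  have hV0 : 1 ≤ V 0 := by
    set j0 : Fin L := ⟨0, hL⟩ with hj0
    have hj0v : j0.val = 0 := rfl
    have hmem : j0 ∈ T 0 (c j0) := by
      rw [memT]
      refine ⟨by omega, rfl, fun j' hj' hj'' => ?_⟩
      exfalso
      have : j0.val < j'.val := hj'
      omega
    have h1 : 1 ≤ d 0 (c j0) := Finset.card_pos.mpr ⟨j0, hmem⟩
    have h2 : 1 ≤ p ^ (c j0) := Nat.one_le_pow _ _ hp
    have h3 : d 0 (c j0) * p ^ (c j0) ≤ V 0 := by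
      apply Finset.single_le_sum (f := fun t => d 0 t * p ^ t)
      · intro t _; exact Nat.zero_le _
      · rw [Finset.mem_range]; exact hclt j0
    have h4 : 1 * 1 ≤ d 0 (c j0) * p ^ (c j0) := Nat.mul_le_mul h1 h2
    omega
  -- V n ≥ n + 1 for n < L
  have key : ∀ n, n < L → n + 1 ≤ V n := by
    intro n
    induction n with
    | zero => intro _; exact hV0
    | succ n ih =>
      intro h
      have h1 := ih (by omega)
      have h2 := step n h
      omega
  have hlastkey := key (L - 1) (by omega)
  have hVlt : V (L - 1) < p ^ (k - 1) :=
    geo (fun t => d (L - 1) t) (fun t => hdlt _ t) (k - 1)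
  omega
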